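/- Let λ > μ > 0, Δt > 0, m = e^{(λ−μ)Δt}, and consider the map Φ(m, σ²) = ((log m)/(2Δt)·(σ²/(m(m−1)) + 1), (log m)/(2Δt)·(σ²/(m(m−1)) − 1)). If (M_n, S_n) are random sequences with √n(M_n − m) → 0 in probability and √n(S_n − σ²) → N(0, 2σ⁴) in distribution, then √n(Φ(M_n, S_n) − Φ(m, σ²)) converges in distribution to a bivariate normal with mean zero and covariance matrix ((log m)²σ⁴/(2(Δt)²m²(m−1)²)) · [[1,1],[1,1]]. -/

import Mathlib

open MeasureTheory Filter

set_option maxHeartbeats 1000000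

lemma integrable_of_bdd {Ω : Type*} [MeasurableSpace Ω] {P : Measure Ω} [IsFiniteMeasure P]
    {g : Ω → ℝ} (hg : AEStronglyMeasurable g P) {C : ℝ} (hC : ∀ ω, |g ω| ≤ C) :
    Integrable g P :=
  (integrable_const C).mono' hg (Filter.Eventually.of_forall fun ω => by
    simpa [Real.norm_eq_abs] using hC ω)

noncomputable def cutoff (a : ℝ) : BoundedContinuousFunction ℝ ℝ :=
  ⟨⟨fun x => min 1 (max (|x| - a) 0), (continuous_const.min ((continuous_abs.sub continuous_const).max continuous_const))⟩, 2, by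
    intro x y
    have hx0 : (0:ℝ) ≤ min 1 (max (|x| - a) 0) := le_min one_pos.le (le_max_right _ _)
    have hy0 : (0:ℝ) ≤ min 1 (max (|y| - a) 0) := le_min one_pos.le (le_max_right _ _)
    have hx1 : min 1 (max (|x| - a) 0) ≤ 1 := min_le_left _ _
    have hy1 : min 1 (max (|y| - a) 0) ≤ 1 := min_le_left _ _
    simp only [ContinuousMap.coe_mk, Real.dist_eq]
    rw [abs_le]
    constructor <;> nlinarith⟩

lemma cutoff_apply (a x : ℝ) : cutoff a x = min 1 (max (|x| - a) 0) := rfl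

lemma cutoff_nonneg (a x : ℝ) : 0 ≤ cutoff a x :=
  le_min one_pos.le (le_max_right _ _)

lemma cutoff_eq_one {a x : ℝ} (h : a + 1 ≤ |x|) : cutoff a x = 1 := by
  rw [cutoff_apply]
  have : (1:ℝ) ≤ max (|x| - a) 0 := le_max_of_le_left (by linarith)
  exact min_eq_left this

lemma cutoff_le_indicator (a x : ℝ) :
    cutoff a x ≤ Set.indicator {y : ℝ | a ≤ |y|} (fun _ => (1:ℝ)) x := by
  rcases le_or_gt a |x| with h | h
  · have : x ∈ {y : ℝ | a ≤ |y|} := h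
    rw [Set.indicator_of_mem this]
    exact min_le_left _ _
  · have hx : x ∉ {y : ℝ | a ≤ |y|} := by simp [Set.mem_setOf_eq, not_le.mpr h]
    rw [Set.indicator_of_notMem hx, cutoff_apply]
    have : max (|x| - a) 0 = 0 := max_eq_right (by linarith)
    simp [this]

/-- tail bound for a sequence converging in distribution -/
lemma tail_bound {Ω : Type*} [MeasurableSpace Ω] {P : Measure Ω} [IsProbabilityMeasure P]
    {Z : ℕ → Ω → ℝ} (hZ : ∀ n, Measurable (Z n))
    {ν : Measure ℝ} [IsProbabilityMeasure ν]
    (hZd : ∀ g : BoundedContinuousFunction ℝ ℝ,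
      Tendsto (fun n => ∫ ω, g (Z n ω) ∂P) atTop (nhds (∫ x, g x ∂ν)))
    {η : ℝ} (hη : 0 < η) :
    ∃ a : ℝ, 1 ≤ a ∧ ∀ᶠ n in atTop, P {ω | a ≤ |Z n ω|} ≤ ENNReal.ofReal η := by
  -- tail of ν tends to 0
  have hmeasset : ∀ b : ℝ, MeasurableSet {y : ℝ | b ≤ |y|} := fun b =>
    measurableSet_le measurable_const continuous_abs.measurable
  have htail : Tendsto (fun k : ℕ => ν {y : ℝ | (k:ℝ) ≤ |y|}) atTop (nhds 0) := by
    have h1 : Tendsto (ν ∘ fun k : ℕ => {y : ℝ | (k:ℝ) ≤ |y|}) atTop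
        (nhds (ν (⋂ k : ℕ, {y : ℝ | (k:ℝ) ≤ |y|}))) := by
      refine tendsto_measure_iInter_atTop (fun k => (hmeasset _).nullMeasurableSet)
        (fun i j hij => ?_) ⟨0, measure_ne_top _ _⟩
      intro y hy
      exact le_trans (show (i:ℝ) ≤ (j:ℝ) by exact_mod_cast hij) hy
    have h2 : (⋂ k : ℕ, {y : ℝ | (k:ℝ) ≤ |y|}) = ∅ := by
      ext y
      simp only [Set.mem_iInter, Set.mem_setOf_eq, Set.mem_empty_iff_false, iff_false, not_forall]
      obtain ⟨k, hk⟩ := exists_nat_gt |y|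
      exact ⟨k, not_le.mpr hk⟩
    rw [h2, measure_empty] at h1
    exact h1
  obtain ⟨k, hk⟩ := (ENNReal.tendsto_atTop_zero.mp htail) (ENNReal.ofReal (η/2))
    (by simp [ENNReal.ofReal_pos, hη])
  set a : ℝ := (k : ℝ) + 1 with ha
  refine ⟨a, by simp [ha, Nat.cast_nonneg], ?_⟩
  -- ∫ cutoff k dν ≤ ν {k ≤ |y|} ≤ η/2
  have hφint : Integrable (fun x => cutoff (k:ℝ) x) ν :=
    integrable_of_bdd (cutoff (k:ℝ)).continuous.aestronglyMeasurable
      (C := 1) (fun x => by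
        rw [abs_of_nonneg (cutoff_nonneg _ _)]; exact min_le_left _ _)
  have hνφ : ∫ x, cutoff (k:ℝ) x ∂ν ≤ η/2 := by
    have h1 : ∫ x, cutoff (k:ℝ) x ∂ν ≤
        ∫ x, Set.indicator {y : ℝ | (k:ℝ) ≤ |y|} (fun _ => (1:ℝ)) x ∂ν := by
      refine integral_mono hφint ?_ (cutoff_le_indicator _)
      exact (integrable_const (1:ℝ)).indicator (hmeasset _)
    have h2 : ∫ x, Set.indicator {y : ℝ | (k:ℝ) ≤ |y|} (fun _ => (1:ℝ)) x ∂ν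
        = (ν {y : ℝ | (k:ℝ) ≤ |y|}).toReal := by
      exact integral_indicator_one (hmeasset (k:ℝ))
    rw [h2] at h1
    refine h1.trans ?_
    have := hk k le_rfl
    exact (ENNReal.toReal_le_of_le_ofReal (by positivity) this)
  -- eventually ∫ cutoff (Z n) < η
  have hev : ∀ᶠ n in atTop, ∫ ω, cutoff (k:ℝ) (Z n ω) ∂P < η := by
    have := hZd (cutoff (k:ℝ))
    have hlt : ∫ x, cutoff (k:ℝ) x ∂ν < η := lt_of_le_of_lt hνφ (by linarith)
    exact this.eventually_lt_const hlt
  filter_upwards [hev] with n hn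
  -- P {a ≤ |Z n|} ≤ ∫ cutoff (Z n)
  have hmeasA : MeasurableSet {ω | a ≤ |Z n ω|} :=
    measurableSet_le measurable_const (hZ n).abs
  have hint1 : Integrable (fun ω => cutoff (k:ℝ) (Z n ω)) P :=
    integrable_of_bdd ((cutoff (k:ℝ)).continuous.measurable.comp (hZ n)).aestronglyMeasurable
      (C := 1) (fun ω => by
        rw [abs_of_nonneg (cutoff_nonneg _ _)]; exact min_le_left _ _)
  have hPA : (P {ω | a ≤ |Z n ω|}).toReal ≤ ∫ ω, cutoff (k:ℝ) (Z n ω) ∂P := by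
    have h2 : (P {ω | a ≤ |Z n ω|}).toReal
        = ∫ ω, Set.indicator {ω | a ≤ |Z n ω|} (fun _ => (1:ℝ)) ω ∂P := by
      exact (integral_indicator_one hmeasA).symm
    rw [h2]
    refine integral_mono ((integrable_const (1:ℝ)).indicator hmeasA) hint1 ?_
    intro ω
    by_cases hω : ω ∈ {ω | a ≤ |Z n ω|}
    · rw [Set.indicator_of_mem hω]
      exact le_of_eq (cutoff_eq_one hω).symm
    · rw [Set.indicator_of_notMem hω]
      exact cutoff_nonneg _ _
  calc P {ω | a ≤ |Z n ω|}
      = ENNReal.ofReal ((P {ω | a ≤ |Z n ω|}).toReal) :=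
        (ENNReal.ofReal_toReal (measure_ne_top _ _)).symm
    _ ≤ ENNReal.ofReal η := ENNReal.ofReal_le_ofReal (hPA.trans hn.le)

lemma slutsky_bcf {Ω : Type*} [MeasurableSpace Ω] (P : Measure Ω) [IsProbabilityMeasure P]
    (Z : ℕ → Ω → ℝ) (hZ : ∀ n, Measurable (Z n))
    (ν : Measure ℝ) [IsProbabilityMeasure ν]
    (hZd : ∀ g : BoundedContinuousFunction ℝ ℝ,
      Tendsto (fun n => ∫ ω, g (Z n ω) ∂P) atTop (nhds (∫ x, g x ∂ν)))
    (c : ℝ) (W : ℕ → Ω → ℝ × ℝ) (hWmeas : ∀ n, Measurable (W n))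
    (hRp : ∀ δ : ℝ, 0 < δ → ∀ η : ℝ, 0 < η → ∀ᶠ n in atTop,
      P {ω | δ ≤ ‖W n ω - (c * Z n ω, c * Z n ω)‖} ≤ ENNReal.ofReal η)
    (f : BoundedContinuousFunction (ℝ × ℝ) ℝ) :
    Tendsto (fun n => ∫ ω, f (W n ω) ∂P) atTop (nhds (∫ x, f (c * x, c * x) ∂ν)) := by
  classical
  set g : BoundedContinuousFunction ℝ ℝ :=
    f.compContinuous ⟨fun x => (c * x, c * x), by continuity⟩ with hg
  have hgapp : ∀ x, g x = f (c * x, c * x) := fun x => rfl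
  have hglim : Tendsto (fun n => ∫ ω, g (Z n ω) ∂P) atTop (nhds (∫ x, f (c * x, c * x) ∂ν)) := by
    have := hZd g
    simpa [hgapp] using this
  -- difference tends to 0
  have hdiff : Tendsto (fun n => (∫ ω, f (W n ω) ∂P) - ∫ ω, g (Z n ω) ∂P) atTop (nhds 0) := by
    rw [NormedAddCommGroup.tendsto_nhds_zero]
    intro ε hε
    set C : ℝ := ‖f‖ + 1 with hC
    have hC0 : 0 < C := by positivity
    have hfb : ∀ p : ℝ × ℝ, |f p| ≤ C := fun p => by
      have := f.norm_coe_le_norm p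
      rw [Real.norm_eq_abs] at this; linarith
    set η : ℝ := ε / (8 * C) with hη
    have hη0 : 0 < η := by positivity
    obtain ⟨a, ha1, hatail⟩ := tail_bound hZ hZd hη0
    -- uniform continuity on compact ball
    set K : Set (ℝ × ℝ) := Metric.closedBall 0 (|c| * a + 2) with hK
    have hKc : IsCompact K := isCompact_closedBall _ _
    have hUC := hKc.uniformContinuousOn_of_continuous f.continuous.continuousOn
    rw [Metric.uniformContinuousOn_iff] at hUC
    obtain ⟨δ', hδ'0, hδ'⟩ := hUC (ε/4) (by positivity)
    set δ : ℝ := min δ' 1 with hδ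
    have hδ0 : 0 < δ := lt_min hδ'0 one_pos
    filter_upwards [hatail, hRp δ hδ0 η hη0] with n hZtail hRn
    set X : Ω → ℝ × ℝ := fun ω => (c * Z n ω, c * Z n ω) with hX
    have hXmeas : Measurable X := ((hZ n).const_mul c).prod ((hZ n).const_mul c)
    -- bad set
    set B : Set Ω := {ω | a ≤ |Z n ω|} ∪ {ω | δ ≤ ‖W n ω - X ω‖} with hB
    have hBmeas : MeasurableSet B := by
      refine MeasurableSet.union ?_ ?_
      · exact measurableSet_le measurable_const (hZ n).abs
      · exact measurableSet_le measurable_const ((hWmeas n).sub hXmeas).norm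
    have hPB : (P B).toReal ≤ 2 * η := by
      have h1 : P B ≤ ENNReal.ofReal η + ENNReal.ofReal η :=
        le_trans (measure_union_le _ _) (add_le_add hZtail hRn)
      have h2 : ENNReal.ofReal η + ENNReal.ofReal η = ENNReal.ofReal (2*η) := by
        rw [← ENNReal.ofReal_add hη0.le hη0.le]; ring_nf
      rw [h2] at h1
      exact ENNReal.toReal_le_of_le_ofReal (by positivity) h1
    -- pointwise bound
    have hpt : ∀ ω, |f (W n ω) - f (X ω)| ≤ ε/4 + B.indicator (fun _ => 2*C) ω := by
      intro ω
      by_cases hω : ω ∈ B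
      · rw [Set.indicator_of_mem hω]
        calc |f (W n ω) - f (X ω)| ≤ |f (W n ω)| + |f (X ω)| := abs_sub _ _
          _ ≤ C + C := add_le_add (hfb _) (hfb _)
          _ ≤ ε/4 + 2*C := by linarith
      · rw [Set.indicator_of_notMem hω]
        simp only [hB, Set.mem_union, Set.mem_setOf_eq, not_or, not_le] at hω
        obtain ⟨hω1, hω2⟩ := hω
        have hXK : X ω ∈ K := by
          rw [hK, Metric.mem_closedBall, dist_zero_right]
          have : ‖X ω‖ = |c| * |Z n ω| := by
            simp [hX, Prod.norm_def, Real.norm_eq_abs, abs_mul]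
          rw [this]
          nlinarith [abs_nonneg c, abs_nonneg (Z n ω), hω1]
        have hWK : W n ω ∈ K := by
          rw [hK, Metric.mem_closedBall, dist_zero_right]
          have h1 : ‖W n ω‖ ≤ ‖X ω‖ + ‖W n ω - X ω‖ := by
            have := norm_add_le (X ω) (W n ω - X ω)
            simpa using this
          have h2 : ‖X ω‖ ≤ |c| * a + 2 - 1 := by
            have : ‖X ω‖ = |c| * |Z n ω| := by
              simp [hX, Prod.norm_def, Real.norm_eq_abs, abs_mul]
            rw [this]
            nlinarith [abs_nonneg c, abs_nonneg (Z n ω), hω1]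
          have h3 : ‖W n ω - X ω‖ ≤ 1 := le_trans hω2.le (min_le_right _ _)
          linarith
        have hd : dist (W n ω) (X ω) < δ' := by
          rw [dist_eq_norm]
          exact lt_of_lt_of_le hω2 (min_le_left _ _)
        have := hδ' _ hWK _ hXK hd
        rw [Real.dist_eq] at this
        linarith
    -- integrate
    have hfW : Integrable (fun ω => f (W n ω)) P :=
      integrable_of_bdd (f.continuous.measurable.comp (hWmeas n)).aestronglyMeasurable
        (C := C) (fun ω => hfb _)
    have hfX : Integrable (fun ω => f (X ω)) P :=
      integrable_of_bdd (f.continuous.measurable.comp hXmeas).aestronglyMeasurable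
        (C := C) (fun ω => hfb _)
    have hgZ : (∫ ω, g (Z n ω) ∂P) = ∫ ω, f (X ω) ∂P := by
      simp [hgapp, hX]
    rw [hgZ, ← integral_sub hfW hfX, Real.norm_eq_abs]
    have h5 : |∫ ω, (f (W n ω) - f (X ω)) ∂P| ≤ ∫ ω, |f (W n ω) - f (X ω)| ∂P := by
      simpa [Real.norm_eq_abs] using norm_integral_le_integral_norm (fun ω => f (W n ω) - f (X ω))
    have h6 : ∫ ω, |f (W n ω) - f (X ω)| ∂P ≤ ∫ ω, (ε/4 + B.indicator (fun _ => 2*C) ω) ∂P := by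
      refine integral_mono (hfW.sub hfX).abs ?_ hpt
      exact (integrable_const (ε/4)).add ((integrable_const (2*C)).indicator hBmeas)
    have h7 : ∫ ω, (ε/4 + B.indicator (fun _ => 2*C) ω) ∂P = ε/4 + (P B).toReal * (2*C) := by
      rw [integral_add (integrable_const _) ((integrable_const (2*C)).indicator hBmeas)]
      rw [integral_indicator_const _ hBmeas]
      simp [smul_eq_mul]
      exact Or.inl rfl
    have h8 : (P B).toReal * (2*C) ≤ 2*η * (2*C) := by
      have := hPB; nlinarith
    have h9 : 2*η*(2*C) = ε/2 := by
      rw [hη]; field_simp; ring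
    have h10 : (P B).toReal * (2*C) ≤ ε/2 := h9 ▸ h8
    calc |∫ ω, (f (W n ω) - f (X ω)) ∂P| ≤ ε/4 + (P B).toReal * (2*C) := le_trans h5 (h6.trans_eq h7)
      _ ≤ ε/4 + ε/2 := by linarith [h10]
      _ < ε := by linarith
  have := hdiff.add hglim
  simpa using this


/-- delta-method step for the asymptotic normality of the
Galton--Watson estimators of the birth and death rates: if `√n(Mₙ - m) → 0` in
probability and `√n(Sₙ - σ²) → N(0, 2σ⁴)` in distribution, then
`√n(Φ(Mₙ,Sₙ) - Φ(m,σ²))` converges in distribution to a degenerate bivariate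
normal with covariance matrix `v·[[1,1],[1,1]]`, i.e. to the law of `(X, X)`
with `X ~ N(0, v)`, where `v = (log m)²σ⁴/(2Δt²m²(m-1)²)`. -/
theorem stmt17 {Ω : Type*} [MeasurableSpace Ω]
    (P : Measure Ω) [IsProbabilityMeasure P]
    (lam mu Δt : ℝ) (hmu : 0 < mu) (hlt : mu < lam) (hΔt : 0 < Δt)
    (m σ2 : ℝ) (hm : m = Real.exp ((lam - mu) * Δt)) (hσ2 : 0 < σ2)
    (Mn Sn : ℕ → Ω → ℝ)
    (hMmeas : ∀ n, Measurable (Mn n)) (hSmeas : ∀ n, Measurable (Sn n))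
    (Φ : ℝ → ℝ → ℝ × ℝ)
    (hΦ : ∀ x s, Φ x s =
      (Real.log x / (2 * Δt) * (s / (x * (x - 1)) + 1),
       Real.log x / (2 * Δt) * (s / (x * (x - 1)) - 1)))
    (hMn : ∀ ε : ℝ, 0 < ε → Tendsto
      (fun n : ℕ => P {ω | ε ≤ |Real.sqrt n * (Mn n ω - m)|}) atTop (nhds 0))
    (hSn : ∀ f : BoundedContinuousFunction ℝ ℝ, Tendsto
      (fun n : ℕ => ∫ ω, f (Real.sqrt n * (Sn n ω - σ2)) ∂P) atTop
      (nhds (∫ x, f x ∂(ProbabilityTheory.gaussianReal 0 (2 * σ2 ^ 2).toNNReal))))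
    (v : ℝ)
    (hv : v = Real.log m ^ 2 * σ2 ^ 2 / (2 * Δt ^ 2 * m ^ 2 * (m - 1) ^ 2)) :
    ∀ f : BoundedContinuousFunction (ℝ × ℝ) ℝ, Tendsto
      (fun n : ℕ => ∫ ω, f (Real.sqrt n * ((Φ (Mn n ω) (Sn n ω)).1 - (Φ m σ2).1),
                        Real.sqrt n * ((Φ (Mn n ω) (Sn n ω)).2 - (Φ m σ2).2)) ∂P)
      atTop
      (nhds (∫ x, f (x, x) ∂(ProbabilityTheory.gaussianReal 0 v.toNNReal))) := by
  intro f
  -- basic facts about m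
  have hm1 : 1 < m := by
    rw [hm, show (1:ℝ) = Real.exp 0 from Real.exp_zero.symm]
    exact Real.exp_lt_exp.mpr (mul_pos (sub_pos.mpr hlt) hΔt)
  have hm0 : 0 < m := by linarith
  have hmm1 : 0 < m - 1 := by linarith
  set hfun : ℝ → ℝ := fun x => Real.log x / (x * (x - 1)) with hfun_def
  set c : ℝ := hfun m / (2 * Δt) with hc
  set Z : ℕ → Ω → ℝ := fun n ω => Real.sqrt n * (Sn n ω - σ2) with hZ
  have hZmeas : ∀ n, Measurable (Z n) := fun n =>
    (measurable_const.mul ((hSmeas n).sub measurable_const))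
  set W : ℕ → Ω → ℝ × ℝ := fun n ω =>
    (Real.sqrt n * ((Φ (Mn n ω) (Sn n ω)).1 - (Φ m σ2).1),
     Real.sqrt n * ((Φ (Mn n ω) (Sn n ω)).2 - (Φ m σ2).2)) with hW
  have hWmeas : ∀ n, Measurable (W n) := by
    intro n
    have hlogM : Measurable fun ω => Real.log (Mn n ω) :=
      Real.measurable_log.comp (hMmeas n)
    have h1 : Measurable fun ω => (Φ (Mn n ω) (Sn n ω)).1 := by
      simp only [hΦ]
      exact ((hlogM.div_const _).mul
        (((hSmeas n).div ((hMmeas n).mul ((hMmeas n).sub measurable_const))).add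
          measurable_const))
    have h2 : Measurable fun ω => (Φ (Mn n ω) (Sn n ω)).2 := by
      simp only [hΦ]
      exact ((hlogM.div_const _).mul
        (((hSmeas n).div ((hMmeas n).mul ((hMmeas n).sub measurable_const))).sub
          measurable_const))
    exact (measurable_const.mul (h1.sub measurable_const)).prod
      (measurable_const.mul (h2.sub measurable_const))
  -- L1 : differentiable transfer of convergence in probability
  have hMn' : ∀ ψ : ℝ → ℝ, DifferentiableAt ℝ ψ m → ∀ ε : ℝ, 0 < ε →
      Tendsto (fun n : ℕ => P {ω | ε ≤ |Real.sqrt n * (ψ (Mn n ω) - ψ m)|})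
        atTop (nhds 0) := by
    intro ψ hψ ε hε
    have hder := hψ.hasDerivAt
    rw [hasDerivAt_iff_isLittleO] at hder
    have h1 := Asymptotics.isLittleO_iff.mp hder one_pos
    rw [Metric.eventually_nhds_iff] at h1
    obtain ⟨δ0, hδ00, hδ0⟩ := h1
    set L : ℝ := |deriv ψ m| + 1 with hL
    have hL0 : 0 < L := by positivity
    have hLip : ∀ x : ℝ, dist x m < δ0 → |ψ x - ψ m| ≤ L * |x - m| := by
      intro x hx
      have h2 := hδ0 hx
      rw [Real.norm_eq_abs, Real.norm_eq_abs, one_mul, smul_eq_mul] at h2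
      have h3 : |ψ x - ψ m| ≤ |ψ x - ψ m - (x - m) * deriv ψ m| + |(x - m) * deriv ψ m| :=
        by have := abs_sub_abs_le_abs_sub (ψ x - ψ m) ((x - m) * deriv ψ m);
           have := abs_add_le (ψ x - ψ m - (x - m) * deriv ψ m) ((x - m) * deriv ψ m);
           simpa using this
      have h4 : |(x - m) * deriv ψ m| = |x - m| * |deriv ψ m| := abs_mul _ _
      rw [hL]; nlinarith [abs_nonneg (x - m)]
    have hsub : ∀ n : ℕ, 1 ≤ n → {ω | ε ≤ |Real.sqrt n * (ψ (Mn n ω) - ψ m)|} ⊆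
        {ω | δ0/2 ≤ |Real.sqrt n * (Mn n ω - m)|} ∪
        {ω | ε/L ≤ |Real.sqrt n * (Mn n ω - m)|} := by
      intro n hn ω hω
      by_contra hcon
      simp only [Set.mem_union, Set.mem_setOf_eq, not_or, not_le] at hcon
      obtain ⟨hc1, hc2⟩ := hcon
      have hsq : (1:ℝ) ≤ Real.sqrt n := by
        rw [Real.one_le_sqrt]; exact_mod_cast hn
      have hsq0 : (0:ℝ) ≤ Real.sqrt n := by linarith
      have habs : |Real.sqrt n * (Mn n ω - m)| = Real.sqrt n * |Mn n ω - m| := by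
        rw [abs_mul, abs_of_nonneg hsq0]
      have hMx : |Mn n ω - m| < δ0 := by
        rw [habs] at hc1
        nlinarith [abs_nonneg (Mn n ω - m)]
      have hlip := hLip (Mn n ω) (by rwa [Real.dist_eq])
      have hfinal : |Real.sqrt n * (ψ (Mn n ω) - ψ m)| < ε := by
        rw [abs_mul, abs_of_nonneg hsq0]
        have h5 : Real.sqrt n * |ψ (Mn n ω) - ψ m| ≤ L * (Real.sqrt n * |Mn n ω - m|) := by
          nlinarith
        have h6 : Real.sqrt n * |Mn n ω - m| < ε / L := by rwa [habs] at hc2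
        calc Real.sqrt n * |ψ (Mn n ω) - ψ m| ≤ L * (Real.sqrt n * |Mn n ω - m|) := h5
          _ < L * (ε / L) := by exact mul_lt_mul_of_pos_left h6 hL0
          _ = ε := by field_simp
      rw [Set.mem_setOf_eq] at hω
      linarith
    have hA := hMn (δ0/2) (by positivity)
    have hB := hMn (ε/L) (by positivity)
    have hsum : Tendsto (fun n : ℕ => P {ω | δ0/2 ≤ |Real.sqrt n * (Mn n ω - m)|}
        + P {ω | ε/L ≤ |Real.sqrt n * (Mn n ω - m)|}) atTop (nhds 0) := by
      have := hA.add hB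
      simpa using this
    refine tendsto_of_tendsto_of_tendsto_of_le_of_le' tendsto_const_nhds hsum
      (Filter.Eventually.of_forall fun n => zero_le) ?_
    filter_upwards [eventually_ge_atTop 1] with n hn
    exact le_trans (measure_mono (hsub n hn)) (measure_union_le _ _)
  -- differentiability of hfun and log at m
  have hne : m * (m - 1) ≠ 0 := by positivity
  have hdiff_h : DifferentiableAt ℝ hfun m := by
    refine DifferentiableAt.div (Real.differentiableAt_log (ne_of_gt hm0)) ?_ hne
    exact differentiableAt_fun_id.mul (differentiableAt_fun_id.sub (differentiableAt_const 1))
  have hdiff_log : DifferentiableAt ℝ Real.log m := Real.differentiableAt_log (ne_of_gt hm0)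
  -- Sn bounded in probability
  have hSprob : ∀ η : ℝ, 0 < η → ∀ᶠ n in atTop,
      P {ω | σ2 + 1 ≤ |Sn n ω|} ≤ ENNReal.ofReal η := by
    intro η hη
    obtain ⟨a, ha1, hatail⟩ := tail_bound hZmeas hSn hη
    have hev1 : ∀ᶠ n : ℕ in atTop, a ≤ Real.sqrt n := by
      filter_upwards [eventually_ge_atTop ⌈a^2⌉₊] with n hn
      have h1 : (a^2 : ℝ) ≤ n := le_trans (Nat.le_ceil _) (by exact_mod_cast hn)
      calc a = Real.sqrt (a^2) := (Real.sqrt_sq (by linarith)).symm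
        _ ≤ Real.sqrt n := Real.sqrt_le_sqrt h1
    filter_upwards [hatail, hev1] with n h1 h2
    refine le_trans (measure_mono ?_) h1
    intro ω hω
    rw [Set.mem_setOf_eq] at hω ⊢
    have h3 : 1 ≤ |Sn n ω - σ2| := by
      rcases abs_cases (Sn n ω) with ⟨h, _⟩ | ⟨h, _⟩ <;>
        rcases abs_cases (Sn n ω - σ2) with ⟨h', _⟩ | ⟨h', _⟩ <;> linarith
    have h4 : |Z n ω| = Real.sqrt n * |Sn n ω - σ2| := by
      rw [hZ, abs_mul, abs_of_nonneg (Real.sqrt_nonneg _)]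
    rw [h4]
    nlinarith [Real.sqrt_nonneg (n:ℝ)]
  -- residual term small in probability
  have hRp : ∀ δ : ℝ, 0 < δ → ∀ η : ℝ, 0 < η → ∀ᶠ n in atTop,
      P {ω | δ ≤ ‖W n ω - (c * Z n ω, c * Z n ω)‖} ≤ ENNReal.ofReal η := by
    intro δ hδ η hη
    have hε1 : (0:ℝ) < δ * Δt / (σ2 + 1) := by positivity
    have hε2 : (0:ℝ) < δ * Δt := by positivity
    have t1 := hSprob (η/3) (by positivity)
    have t2 := (hMn' hfun hdiff_h _ hε1).eventually_lt_const
      (show (0:ENNReal) < ENNReal.ofReal (η/3) by simp [ENNReal.ofReal_pos]; positivity)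
    have t3 := (hMn' Real.log hdiff_log _ hε2).eventually_lt_const
      (show (0:ENNReal) < ENNReal.ofReal (η/3) by simp [ENNReal.ofReal_pos]; positivity)
    filter_upwards [t1, t2, t3] with n h1 h2 h3
    have hsub : {ω | δ ≤ ‖W n ω - (c * Z n ω, c * Z n ω)‖} ⊆
        {ω | σ2 + 1 ≤ |Sn n ω|} ∪
        ({ω | δ * Δt / (σ2 + 1) ≤ |Real.sqrt n * (hfun (Mn n ω) - hfun m)|} ∪
         {ω | δ * Δt ≤ |Real.sqrt n * (Real.log (Mn n ω) - Real.log m)|}) := by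
      intro ω hω
      by_contra hcon
      simp only [Set.mem_union, Set.mem_setOf_eq, not_or, not_le] at hcon
      obtain ⟨hs, hA, hB⟩ := hcon
      rw [Set.mem_setOf_eq] at hω
      have hform : W n ω - (c * Z n ω, c * Z n ω) =
          ((Sn n ω * (Real.sqrt n * (hfun (Mn n ω) - hfun m))
              + Real.sqrt n * (Real.log (Mn n ω) - Real.log m)) / (2 * Δt),
           (Sn n ω * (Real.sqrt n * (hfun (Mn n ω) - hfun m))
              - Real.sqrt n * (Real.log (Mn n ω) - Real.log m)) / (2 * Δt)) := by
        simp only [hW, hZ, hc, hfun_def, hΦ]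
        simp only [Prod.mk_sub_mk, Prod.mk.injEq]
        constructor <;>
          · simp only [div_eq_mul_inv, mul_inv]
            ring
      have habs_s : |Sn n ω| < σ2 + 1 := hs
      have hb1 : |Sn n ω * (Real.sqrt n * (hfun (Mn n ω) - hfun m))
          + Real.sqrt n * (Real.log (Mn n ω) - Real.log m)| < 2 * (δ * Δt) := by
        have h4 := abs_add_le (Sn n ω * (Real.sqrt n * (hfun (Mn n ω) - hfun m)))
          (Real.sqrt n * (Real.log (Mn n ω) - Real.log m))
        rw [abs_mul] at h4
        have h5 : |Sn n ω| * |Real.sqrt n * (hfun (Mn n ω) - hfun m)|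
            < (σ2 + 1) * (δ * Δt / (σ2 + 1)) :=
          mul_lt_mul'' habs_s hA (abs_nonneg _) (abs_nonneg _)
        have h6 : (σ2 + 1) * (δ * Δt / (σ2 + 1)) = δ * Δt := by field_simp
        linarith
      have hb2 : |Sn n ω * (Real.sqrt n * (hfun (Mn n ω) - hfun m))
          - Real.sqrt n * (Real.log (Mn n ω) - Real.log m)| < 2 * (δ * Δt) := by
        have h4 := abs_sub (Sn n ω * (Real.sqrt n * (hfun (Mn n ω) - hfun m)))
          (Real.sqrt n * (Real.log (Mn n ω) - Real.log m))
        rw [abs_mul] at h4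
        have h5 : |Sn n ω| * |Real.sqrt n * (hfun (Mn n ω) - hfun m)|
            < (σ2 + 1) * (δ * Δt / (σ2 + 1)) :=
          mul_lt_mul'' habs_s hA (abs_nonneg _) (abs_nonneg _)
        have h6 : (σ2 + 1) * (δ * Δt / (σ2 + 1)) = δ * Δt := by field_simp
        linarith
      have h2Δt : (0:ℝ) < 2 * Δt := by linarith
      have hnorm : ‖W n ω - (c * Z n ω, c * Z n ω)‖ < δ := by
        rw [hform, Prod.norm_def]
        have h7 : ‖(Sn n ω * (Real.sqrt n * (hfun (Mn n ω) - hfun m))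
            + Real.sqrt n * (Real.log (Mn n ω) - Real.log m)) / (2 * Δt)‖ < δ := by
          rw [Real.norm_eq_abs, abs_div, abs_of_pos h2Δt, div_lt_iff₀ h2Δt]
          calc _ < 2 * (δ * Δt) := hb1
            _ = δ * (2 * Δt) := by ring
        have h8 : ‖(Sn n ω * (Real.sqrt n * (hfun (Mn n ω) - hfun m))
            - Real.sqrt n * (Real.log (Mn n ω) - Real.log m)) / (2 * Δt)‖ < δ := by
          rw [Real.norm_eq_abs, abs_div, abs_of_pos h2Δt, div_lt_iff₀ h2Δt]
          calc _ < 2 * (δ * Δt) := hb2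
            _ = δ * (2 * Δt) := by ring
        exact max_lt h7 h8
      linarith
    refine le_trans (measure_mono hsub) ?_
    refine le_trans (measure_union_le _ _) ?_
    refine le_trans (add_le_add le_rfl (measure_union_le _ _)) ?_
    have h9 : ENNReal.ofReal (η/3) + (ENNReal.ofReal (η/3) + ENNReal.ofReal (η/3))
        = ENNReal.ofReal η := by
      rw [← ENNReal.ofReal_add (by positivity) (by positivity),
        ← ENNReal.ofReal_add (by positivity) (by positivity)]
      ring_nf
    rw [← h9]
    exact add_le_add h1 (add_le_add h2.le h3.le)
  -- apply the Slutsky lemma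
  have H := slutsky_bcf P Z hZmeas
    (ProbabilityTheory.gaussianReal 0 (2 * σ2 ^ 2).toNNReal) hSn c W hWmeas hRp f
  -- identify the limit
  have hvnn : 0 ≤ v := by rw [hv]; positivity
  have hvar : ((.mk (c^2) (sq_nonneg c) : NNReal) * (2 * σ2 ^ 2).toNNReal : NNReal) = v.toNNReal := by
    apply NNReal.coe_injective
    push_cast
    rw [Real.coe_toNNReal _ (by positivity : (0:ℝ) ≤ 2 * σ2 ^ 2),
      Real.coe_toNNReal _ hvnn]
    simp only [hc, hfun_def]
    rw [hv]
    field_simp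
  have hmap : (ProbabilityTheory.gaussianReal 0 v.toNNReal)
      = (ProbabilityTheory.gaussianReal 0 (2 * σ2 ^ 2).toNNReal).map (c * ·) := by
    rw [ProbabilityTheory.gaussianReal_map_const_mul c, mul_zero]
    exact congrArg (ProbabilityTheory.gaussianReal 0) hvar.symm
  have hint : ∫ x, f (x, x) ∂(ProbabilityTheory.gaussianReal 0 v.toNNReal)
      = ∫ x, f (c * x, c * x) ∂(ProbabilityTheory.gaussianReal 0 (2 * σ2 ^ 2).toNNReal) := by
    rw [hmap]
    exact integral_map (measurable_const_mul c).aemeasurable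
      (Continuous.aestronglyMeasurable
        (by continuity : Continuous fun x : ℝ => f (x, x)))
  rw [hint]
  exact H
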